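/- Let F be a totally real field of degree n with group of totally positive units U_F, let a be a fractional ideal of F, and let r ≥ 1. Then the map sending the U_F-orbit of a class [λ] ∈ (a^{-1} \ p a^{-1})/p^r a^{-1}, where λ is chosen totally positive in its class, to the class of the integral ideal a·(λ) in the narrow ray class group G_{p^r} of conductor p^r, is a well-defined injection whose image is exactly the set of classes in G_{p^r} mapping to the class of a in the narrow class group G_1. -/

import Mathlib

open scoped BigOperators
open NumberField

/-- Let `F` be a totally real field with group of totally positive units
`U_F`, `a` a nonzero integral ideal coprime to the (inert) prime `p`, `J = a⁻¹`, and
`r ≥ 1`.  The map sending the `U_F`-orbit of a class `[λ] ∈ (a⁻¹ ∖ p a⁻¹)/p^r a⁻¹`, with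
`λ` totally positive, to the class of the integral ideal `a·(λ)` in the narrow ray class
group `G_{p^r}` is a well-defined injection whose image is exactly the set of classes of
`G_{p^r}` mapping to the class of `a` in the narrow class group `G_1`.  Concretely:
(1) two totally positive elements `λ, λ'` of `a⁻¹ ∖ p a⁻¹` lie in the same
`U_F`-orbit mod `p^r a⁻¹` iff the ideals `a·(λ)` and `a·(λ')` agree in `G_{p^r}`, i.e.
differ by a totally positive `μ` with `μ ≡ 1 mod p^r (a λ')⁻¹` (well-definedness and
injectivity); and the image is the fiber over `[a]`:
(2) if `b` is an integral ideal coprime to `p` with `b = a·(ν)` for a totally positive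
`ν`, then `ν ∈ a⁻¹ ∖ p a⁻¹`;
(3) conversely, every totally positive `λ ∈ a⁻¹ ∖ p a⁻¹` yields an integral ideal
`b = a·(λ)` coprime to `p`. -/
theorem stmt_16
    (p r : ℕ) [Fact p.Prime] (hr : 1 ≤ r)
    (F : Type*) [Field F] [NumberField F]
    (htot : ∀ v : InfinitePlace F, v.IsReal)
    (a : Ideal (𝓞 F)) (ha : a ≠ ⊥)
    (hinert : Prime (p : 𝓞 F))                                   -- p is inert in F
    (hcop : IsCoprime (Ideal.span {(p : 𝓞 F)}) a)                -- a is coprime to p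
    (J : Submodule ℤ F)
    (hJ : J = Submodule.restrictScalars ℤ
      ((((a : FractionalIdeal (nonZeroDivisors (𝓞 F)) F)⁻¹ :
          FractionalIdeal (nonZeroDivisors (𝓞 F)) F) : Submodule (𝓞 F) F)))  -- J = a⁻¹
    (TotPos : F → Prop) (hTP : ∀ x : F, TotPos x ↔ ∀ φ : F →+* ℝ, 0 < φ x) :
    -- (1) well-definedness and injectivity
    (∀ lam lam' : F, lam ∈ J → lam' ∈ J → TotPos lam → TotPos lam' →
      lam ≠ 0 → lam' ≠ 0 →
      (¬ ∃ w ∈ J, lam = (p : ℤ) • w) → (¬ ∃ w ∈ J, lam' = (p : ℤ) • w) →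
      ((∃ u : (𝓞 F)ˣ, TotPos (algebraMap (𝓞 F) F u) ∧
          ∃ w ∈ J, lam - (algebraMap (𝓞 F) F u) * lam' = ((p : ℤ) ^ r) • w)
        ↔ (∃ μ : F, TotPos μ ∧
            (∃ ε : (𝓞 F)ˣ, μ * lam' = (algebraMap (𝓞 F) F ε) * lam) ∧
            ∃ w ∈ J, μ * lam' - lam' = ((p : ℤ) ^ r) • w))) ∧
    -- (2) the image contains only, and
    (∀ b : Ideal (𝓞 F), IsCoprime (Ideal.span {(p : 𝓞 F)}) b →
      ∀ ν : F, TotPos ν →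
        (b : FractionalIdeal (nonZeroDivisors (𝓞 F)) F)
            = (a : FractionalIdeal (nonZeroDivisors (𝓞 F)) F)
              * FractionalIdeal.spanSingleton (nonZeroDivisors (𝓞 F)) ν →
        ν ∈ J ∧ ¬ ∃ w ∈ J, ν = (p : ℤ) • w) ∧
    -- (3) exactly, the classes over [a]
    (∀ lam : F, lam ∈ J → TotPos lam → lam ≠ 0 →
      (¬ ∃ w ∈ J, lam = (p : ℤ) • w) →
      ∃ b : Ideal (𝓞 F), IsCoprime (Ideal.span {(p : 𝓞 F)}) b ∧
        (b : FractionalIdeal (nonZeroDivisors (𝓞 F)) F)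
          = (a : FractionalIdeal (nonZeroDivisors (𝓞 F)) F)
            * FractionalIdeal.spanSingleton (nonZeroDivisors (𝓞 F)) lam) := by
  
  have hpz : (p : 𝓞 F) ≠ 0 := hinert.ne_zero
  have haF : (a : FractionalIdeal (nonZeroDivisors (𝓞 F)) F) ≠ 0 := by
    simpa using ha
  have hmemJ : ∀ x : F, x ∈ J ↔
      x ∈ (((a : FractionalIdeal (nonZeroDivisors (𝓞 F)) F))⁻¹ :
        FractionalIdeal (nonZeroDivisors (𝓞 F)) F) := by
    intro x; rw [hJ]; exact Iff.rfl
  have hJmul : ∀ (c : 𝓞 F) (x : F), x ∈ J → (algebraMap (𝓞 F) F c) * x ∈ J := by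
    intro c x hx
    rw [hmemJ] at hx ⊢
    have := Submodule.smul_mem
      ((((a : FractionalIdeal (nonZeroDivisors (𝓞 F)) F))⁻¹ :
        FractionalIdeal (nonZeroDivisors (𝓞 F)) F) : Submodule (𝓞 F) F) c
      (by simpa using hx)
    simpa [Algebra.smul_def] using this
  have hinvpos : ∀ (u : (𝓞 F)ˣ) (φ : F →+* ℝ), 0 < φ (algebraMap (𝓞 F) F u) →
      0 < φ (algebraMap (𝓞 F) F ↑u⁻¹) := by
    intro u φ hu
    have h1 : φ (algebraMap (𝓞 F) F ↑u) * φ (algebraMap (𝓞 F) F ↑u⁻¹) = 1 := by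
      rw [← map_mul, ← map_mul, Units.mul_inv, map_one, map_one]
    nlinarith
  have hpF : ∀ w : F, (p : ℤ) • w = (p : F) * w := by
    intro w; rw [zsmul_eq_mul]; push_cast; ring
  refine ⟨?_, ?_, ?_⟩
  · -- (1)
    intro lam lam' hlamJ hlam'J hpos hpos' hne hne' _ _
    constructor
    · rintro ⟨u, hu, w, hwJ, heq⟩
      have heq' : lam - (algebraMap (𝓞 F) F ↑u) * lam' = (p : F) ^ r * w := by
        rw [zsmul_eq_mul] at heq; push_cast at heq; exact heq
      have huu : (algebraMap (𝓞 F) F ↑u⁻¹) * (algebraMap (𝓞 F) F ↑u) = 1 := by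
        rw [← map_mul, Units.inv_mul, map_one]
      refine ⟨(algebraMap (𝓞 F) F ↑u⁻¹) * lam / lam', ?_, ⟨u⁻¹, by field_simp⟩,
        (algebraMap (𝓞 F) F ↑u⁻¹) * w, hJmul _ _ hwJ, ?_⟩
      · rw [hTP]; intro φ
        have h1 := hinvpos u φ ((hTP _).mp hu φ)
        have h2 := (hTP lam).mp hpos φ
        have h3 := (hTP lam').mp hpos' φ
        have h4 : φ ((algebraMap (𝓞 F) F ↑u⁻¹) * lam / lam')
            = φ (algebraMap (𝓞 F) F ↑u⁻¹) * φ lam / φ lam' := by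
          rw [map_div₀, map_mul]
        rw [h4]; positivity
      · rw [zsmul_eq_mul]; push_cast
        rw [div_mul_cancel₀ _ hne']
        linear_combination (algebraMap (𝓞 F) F ↑u⁻¹) * heq' + lam' * huu
    · rintro ⟨μ, hμ, ⟨ε, hε⟩, w, hwJ, heq⟩
      have heq' : μ * lam' - lam' = (p : F) ^ r * w := by
        rw [zsmul_eq_mul] at heq; push_cast at heq; exact heq
      have hii : (algebraMap (𝓞 F) F ↑ε⁻¹) * (algebraMap (𝓞 F) F ↑ε) = 1 := by
        rw [← map_mul, Units.inv_mul, map_one]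
      refine ⟨ε⁻¹, ?_, (algebraMap (𝓞 F) F ↑ε⁻¹) * w, hJmul _ _ hwJ, ?_⟩
      · rw [hTP]; intro φ
        apply hinvpos
        have h2 := (hTP lam).mp hpos φ
        have h3 := (hTP lam').mp hpos' φ
        have h4 := (hTP μ).mp hμ φ
        have h5 : φ μ * φ lam' = φ (algebraMap (𝓞 F) F ↑ε) * φ lam := by
          rw [← map_mul, ← map_mul, hε]
        nlinarith [mul_pos h4 h3]
      · rw [zsmul_eq_mul]; push_cast
        linear_combination (algebraMap (𝓞 F) F ↑ε⁻¹) * heq'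
          - (algebraMap (𝓞 F) F ↑ε⁻¹) * hε - lam * hii
  · -- (2)
    intro b hbcop ν hν hb
    have hspan : FractionalIdeal.spanSingleton (nonZeroDivisors (𝓞 F)) ν
        = ((a : FractionalIdeal (nonZeroDivisors (𝓞 F)) F))⁻¹
          * (b : FractionalIdeal (nonZeroDivisors (𝓞 F)) F) := by
      rw [hb, ← mul_assoc, mul_comm ((a : FractionalIdeal (nonZeroDivisors (𝓞 F)) F))⁻¹,
        mul_inv_cancel₀ haF, one_mul]
    have hνmem : ν ∈ FractionalIdeal.spanSingleton (nonZeroDivisors (𝓞 F)) ν :=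
      FractionalIdeal.mem_spanSingleton_self _ _
    have hle : ((a : FractionalIdeal (nonZeroDivisors (𝓞 F)) F))⁻¹
        * (b : FractionalIdeal (nonZeroDivisors (𝓞 F)) F)
        ≤ ((a : FractionalIdeal (nonZeroDivisors (𝓞 F)) F))⁻¹ := by
      calc _ ≤ ((a : FractionalIdeal (nonZeroDivisors (𝓞 F)) F))⁻¹ * 1 :=
            mul_right_mono FractionalIdeal.coeIdeal_le_one
        _ = _ := mul_one _
    have hνJ : ν ∈ J := (hmemJ ν).mpr (hle (hspan ▸ hνmem))
    refine ⟨hνJ, ?_⟩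
    rintro ⟨w, hwJ, hw⟩
    have hwI := (hmemJ w).mp hwJ
    have hbl : (b : FractionalIdeal (nonZeroDivisors (𝓞 F)) F)
        ≤ ↑(Ideal.span {(p : 𝓞 F)}) := by
      rw [hb, FractionalIdeal.coeIdeal_span_singleton, map_natCast]
      have hνeq : ν = (p : F) * w := by rw [hw, hpF]
      rw [hνeq, ← FractionalIdeal.spanSingleton_mul_spanSingleton]
      calc (a : FractionalIdeal (nonZeroDivisors (𝓞 F)) F)
            * (FractionalIdeal.spanSingleton (nonZeroDivisors (𝓞 F)) ((p : F))
              * FractionalIdeal.spanSingleton (nonZeroDivisors (𝓞 F)) w)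
          = FractionalIdeal.spanSingleton (nonZeroDivisors (𝓞 F)) ((p : F))
            * ((a : FractionalIdeal (nonZeroDivisors (𝓞 F)) F)
              * FractionalIdeal.spanSingleton (nonZeroDivisors (𝓞 F)) w) := by ring
        _ ≤ FractionalIdeal.spanSingleton (nonZeroDivisors (𝓞 F)) ((p : F))
            * ((a : FractionalIdeal (nonZeroDivisors (𝓞 F)) F)
              * ((a : FractionalIdeal (nonZeroDivisors (𝓞 F)) F))⁻¹) := by
            exact mul_right_mono
              (mul_right_mono
                (FractionalIdeal.spanSingleton_le_iff_mem.mpr hwI))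
        _ = FractionalIdeal.spanSingleton (nonZeroDivisors (𝓞 F)) ((p : F)) := by
            rw [mul_inv_cancel₀ haF, mul_one]
    have hble : b ≤ Ideal.span {(p : 𝓞 F)} :=
      (FractionalIdeal.coeIdeal_le_coeIdeal F).mp hbl
    have hsup := Ideal.isCoprime_iff_sup_eq.mp hbcop
    rw [sup_eq_left.mpr hble] at hsup
    exact hinert.not_unit (Ideal.span_singleton_eq_top.mp hsup)
  · -- (3)
    intro lam hlamJ hpos hne hnp
    have hlamI := (hmemJ lam).mp hlamJ
    have hle1 : (a : FractionalIdeal (nonZeroDivisors (𝓞 F)) F)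
        * FractionalIdeal.spanSingleton (nonZeroDivisors (𝓞 F)) lam ≤ 1 := by
      calc (a : FractionalIdeal (nonZeroDivisors (𝓞 F)) F)
            * FractionalIdeal.spanSingleton (nonZeroDivisors (𝓞 F)) lam
          ≤ (a : FractionalIdeal (nonZeroDivisors (𝓞 F)) F)
            * ((a : FractionalIdeal (nonZeroDivisors (𝓞 F)) F))⁻¹ :=
            mul_right_mono
              (FractionalIdeal.spanSingleton_le_iff_mem.mpr hlamI)
        _ = 1 := mul_inv_cancel₀ haF
    obtain ⟨b, hb⟩ := FractionalIdeal.le_one_iff_exists_coeIdeal.mp hle1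
    refine ⟨b, ?_, hb⟩
    have hprime : (Ideal.span {(p : 𝓞 F)}).IsPrime :=
      (Ideal.span_singleton_prime hpz).mpr hinert
    have hmax : (Ideal.span {(p : 𝓞 F)}).IsMaximal :=
      hprime.isMaximal (by simp [Ideal.span_singleton_eq_bot, hpz])
    rw [Ideal.isCoprime_iff_sup_eq]
    by_contra hsup
    have hble : b ≤ Ideal.span {(p : 𝓞 F)} := by
      have := hmax.eq_of_le hsup le_sup_left
      exact le_sup_right.trans this.ge
    -- derive contradiction with hnp
    have hbl : (a : FractionalIdeal (nonZeroDivisors (𝓞 F)) F)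
        * FractionalIdeal.spanSingleton (nonZeroDivisors (𝓞 F)) lam
        ≤ FractionalIdeal.spanSingleton (nonZeroDivisors (𝓞 F)) ((p : F)) := by
      rw [← hb] at *
      have := (FractionalIdeal.coeIdeal_le_coeIdeal (K := F)).mpr hble
      rwa [FractionalIdeal.coeIdeal_span_singleton, map_natCast, hb] at this
    have hsl : FractionalIdeal.spanSingleton (nonZeroDivisors (𝓞 F)) lam
        ≤ FractionalIdeal.spanSingleton (nonZeroDivisors (𝓞 F)) ((p : F))
          * ((a : FractionalIdeal (nonZeroDivisors (𝓞 F)) F))⁻¹ := by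
      calc FractionalIdeal.spanSingleton (nonZeroDivisors (𝓞 F)) lam
          = ((a : FractionalIdeal (nonZeroDivisors (𝓞 F)) F))⁻¹
            * ((a : FractionalIdeal (nonZeroDivisors (𝓞 F)) F)
              * FractionalIdeal.spanSingleton (nonZeroDivisors (𝓞 F)) lam) := by
            rw [← mul_assoc, mul_comm ((a : FractionalIdeal (nonZeroDivisors (𝓞 F)) F))⁻¹,
              mul_inv_cancel₀ haF, one_mul]
        _ ≤ _ := by
            rw [mul_comm (FractionalIdeal.spanSingleton (nonZeroDivisors (𝓞 F)) ((p : F)))]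
            exact mul_right_mono hbl
    have hlam' : lam ∈ FractionalIdeal.spanSingleton (nonZeroDivisors (𝓞 F)) ((p : F))
        * ((a : FractionalIdeal (nonZeroDivisors (𝓞 F)) F))⁻¹ :=
      hsl (FractionalIdeal.mem_spanSingleton_self _ _)
    obtain ⟨w, hwI, hw⟩ := FractionalIdeal.mem_singleton_mul.mp hlam'
    exact hnp ⟨w, (hmemJ w).mpr hwI, by rw [hpF, hw]⟩
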